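/- Let X be a Banach space, K₁ ⊆ X compact, and V ⊆ C(K₁) compact. Then for all integers n, k ≥ 1 there exists a continuous operator G_k : V → C([0,1]ⁿ) with the following two properties. (1) There is a ReLU neural network φ : [0,1]ⁿ → ℝ of depth 2k³ + 8 whose width is bounded by an absolute constant (independent of n and k) such that φ(y) = G_k(u)(y) for every u ∈ V and every y ∈ [0,1]ⁿ. (2) For every integer m ≥ 1, every ReLU neural network ψ : [0,1]^{n+m} → ℝ with n + m inputs, depth at most k, and at most 2^k total nodes, every choice of points x₁, …, x_m ∈ K₁, and every u ∈ V, one has ∫_{[0,1]ⁿ} |G_k(u)(y) − ψ(u(x₁), …, u(x_m), y)| dy ≥ 1/64. -/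

import Mathlib

open scoped BigOperators
open MeasureTheory
open scoped Classical

/-- A feedforward neural network, given by a number of affine layers (`depth`),
layer dimensions (`dims i` is the dimension of the output of the `i`-th affine map,
with `dims 0` the input dimension; the output layer has dimension 1), weights and biases.
Data beyond the relevant indices is junk. -/
structure NeuralNet where
  depth : ℕ
  dims : ℕ → ℕ
  weight : ℕ → ℕ → ℕ → ℝ
  bias : ℕ → ℕ → ℝ

namespace NeuralNet

/-- Output of the `i`-th hidden layer (layer `0` is the input itself),
where the activation `σ` is applied entrywise after each affine map. -/
def hidden (σ : ℝ → ℝ) (net : NeuralNet) (x : ℕ → ℝ) : ℕ → ℕ → ℝ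
  | 0 => x
  | i + 1 => fun r =>
      σ ((∑ c ∈ Finset.range (net.dims i),
            net.weight (i + 1) r c * hidden σ net x i c) + net.bias (i + 1) r)

/-- The (scalar) output of the network: the final affine map `A_depth`
applied, without activation, to the last hidden layer. -/
def output (σ : ℝ → ℝ) (net : NeuralNet) (x : ℕ → ℝ) : ℝ :=
  (∑ c ∈ Finset.range (net.dims (net.depth - 1)),
    net.weight net.depth 0 c * hidden σ net x (net.depth - 1) c) + net.bias net.depth 0

/-- The width of a network: the maximal dimension of a hidden layer. -/
def width (net : NeuralNet) : ℕ :=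
  (Finset.Icc 1 (net.depth - 1)).sup net.dims

/-- The total number of (hidden) nodes of a network. -/
def totalNodes (net : NeuralNet) : ℕ :=
  ∑ i ∈ Finset.Icc 1 (net.depth - 1), net.dims i

/-- `net` represents the function `f : ℝ^d → ℝ` with activation `σ`. -/
def Represents (σ : ℝ → ℝ) (net : NeuralNet) {d : ℕ} (f : (Fin d → ℝ) → ℝ) : Prop :=
  1 ≤ net.depth ∧ net.dims 0 = d ∧
    ∀ x : Fin d → ℝ,
      net.output σ (fun i => if h : i < d then x ⟨i, h⟩ else 0) = f x

/-- `net` represents the function `f : ℝ^d → ℝ` with activation `σ`, as a network with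
truncated inputs: each input coordinate `x` is first replaced by `⌊base ^ κ * x⌋`. -/
def RepresentsTrunc (σ : ℝ → ℝ) (net : NeuralNet) (base : ℝ) {d : ℕ}
    (f : (Fin d → ℝ) → ℝ) : Prop :=
  ∃ κ : ℤ, 1 ≤ net.depth ∧ net.dims 0 = d ∧
    ∀ x : Fin d → ℝ,
      net.output σ (fun i => if h : i < d then (⌊base ^ κ * x ⟨i, h⟩⌋ : ℝ) else 0) = f x

end NeuralNet

/-- The ReLU activation function. -/
def relu : ℝ → ℝ := fun t => max t 0

/-- `σ` has the density property: for every dimension `d`, the span of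
`{x ↦ σ (w ⬝ x - θ)}` is dense in `C(ℝ^d)` for uniform convergence on compact sets. -/
def DensityProperty (σ : ℝ → ℝ) : Prop :=
  ∀ (d : ℕ) (f : (Fin d → ℝ) → ℝ), Continuous f →
    ∀ K : Set (Fin d → ℝ), IsCompact K → ∀ ε : ℝ, 0 < ε →
      ∃ (N : ℕ) (c : Fin N → ℝ) (w : Fin N → Fin d → ℝ) (θ : Fin N → ℝ),
        ∀ x ∈ K, |f x - ∑ i : Fin N, c i * σ ((∑ j : Fin d, w i j * x j) - θ i)| < ε

/-- `σ` is continuously differentiable at some point with a nonzero derivative there: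
differentiable on a neighborhood of `α`, with derivative continuous at `α` and nonzero. -/
def ContDiffAtNonzeroDeriv (σ : ℝ → ℝ) : Prop :=
  ∃ α : ℝ, (∀ᶠ x in nhds α, DifferentiableAt ℝ σ x) ∧
    ContinuousAt (deriv σ) α ∧ deriv σ α ≠ 0

/-- `σ` is a polynomial function. -/
def IsPolyFun (σ : ℝ → ℝ) : Prop :=
  ∃ p : Polynomial ℝ, ∀ x : ℝ, σ x = p.eval x

/-- `σ` is a non-affine polynomial function (degree at least 2). -/
def IsNonAffinePolyFun (σ : ℝ → ℝ) : Prop :=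
  ∃ p : Polynomial ℝ, 2 ≤ p.natDegree ∧ ∀ x : ℝ, σ x = p.eval x

noncomputable section S0
namespace S0


/-- The tent map, written with `relu` so that it matches network layers. -/
def tent (t : ℝ) : ℝ := 2 * relu t - 4 * relu (t - 1/2)

lemma relu_of_nonneg {t : ℝ} (h : 0 ≤ t) : relu t = t := max_eq_left h
lemma relu_of_nonpos {t : ℝ} (h : t ≤ 0) : relu t = 0 := max_eq_right h
lemma continuous_relu : Continuous relu := continuous_id.max continuous_const

lemma tent_left {t : ℝ} (h0 : 0 ≤ t) (h1 : t ≤ 1/2) : tent t = 2 * t := by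
  unfold tent
  rw [relu_of_nonneg h0, relu_of_nonpos (by linarith)]; ring

lemma tent_right {t : ℝ} (h0 : 1/2 ≤ t) (h1 : t ≤ 1) : tent t = 2 - 2 * t := by
  unfold tent
  rw [relu_of_nonneg (by linarith), relu_of_nonneg (by linarith)]; ring

lemma tent_mem {t : ℝ} (h : t ∈ Set.Icc (0:ℝ) 1) : tent t ∈ Set.Icc (0:ℝ) 1 := by
  obtain ⟨h0, h1⟩ := h
  rcases le_total t (1/2) with h | h
  · rw [tent_left h0 h]; constructor <;> linarith
  · rw [tent_right h h1]; constructor <;> linarith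

lemma tent_iterate_mem {t : ℝ} (h : t ∈ Set.Icc (0:ℝ) 1) (L : ℕ) :
    tent^[L] t ∈ Set.Icc (0:ℝ) 1 := by
  induction L with
  | zero => simpa using h
  | succ L ih => rw [Function.iterate_succ_apply']; exact tent_mem ih

lemma continuous_tent : Continuous tent := by
  unfold tent
  exact ((continuous_const.mul continuous_relu).sub
    (continuous_const.mul (continuous_relu.comp (continuous_id.sub continuous_const))))

/-- Closed form for the iterated tent map on dyadic half-teeth. -/
lemma sawtooth_formula : ∀ (L j : ℕ), j < 2 ^ (L+1) → ∀ x : ℝ,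
    (j : ℝ) / 2 ^ (L+1) ≤ x → x ≤ ((j : ℝ) + 1) / 2 ^ (L+1) →
    tent^[L+1] x = if Even j then 2 ^ (L+1) * x - j else ((j : ℝ) + 1) - 2 ^ (L+1) * x := by
  intro L
  induction L with
  | zero =>
    intro j hj x hx1 hx2
    interval_cases j
    · simp only [Nat.cast_zero] at *
      norm_num at hx1 hx2 ⊢
      rw [tent_left hx1 (by linarith)]
    · simp only [Nat.cast_one] at *
      norm_num at hx1 hx2 ⊢
      rw [tent_right (by linarith) (by linarith)]
      try ring
  | succ L ih =>
    intro j hj x hx1 hx2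
    set P : ℝ := 2 ^ (L+1) with hP
    have hPpos : (0:ℝ) < P := by positivity
    have hPP : (2:ℝ) ^ (L+1+1) = 2 * P := by rw [hP, pow_succ]; ring
    have hx1' : (j : ℝ) ≤ 2 * P * x := by
      rw [div_le_iff₀ (by positivity), hPP] at hx1; linarith
    have hx2' : 2 * P * x ≤ (j : ℝ) + 1 := by
      rw [le_div_iff₀ (by positivity), hPP] at hx2; linarith
    rw [Function.iterate_succ_apply]
    rcases lt_or_ge j (2 ^ (L+1)) with hleft | hright
    · -- left half: x ≤ 1/2, tent x = 2x
      have hj1 : (j:ℝ) + 1 ≤ P := by rw [hP]; exact_mod_cast hleft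
      have hx0 : 0 ≤ x := by
        have : (0:ℝ) ≤ (j:ℝ) := Nat.cast_nonneg j
        nlinarith
      have hxh : x ≤ 1/2 := by nlinarith
      rw [tent_left hx0 hxh]
      have := ih j hleft (2*x) (by rw [div_le_iff₀ hPpos]; linarith)
        (by rw [le_div_iff₀ hPpos]; linarith)
      rw [this, hPP]
      split <;> ring
    · -- right half: x ≥ 1/2, tent x = 2 - 2x
      have hjP : P ≤ (j:ℝ) := by rw [hP]; exact_mod_cast hright
      have hj2P : (j:ℝ) + 1 ≤ 2 * P := by
        have : j + 1 ≤ 2 ^ (L+1+1) := hj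
        have := (Nat.cast_le (α := ℝ)).2 this
        push_cast at this; rw [hPP] at *; linarith
      have hxh : 1/2 ≤ x := by nlinarith
      have hx1'' : x ≤ 1 := by nlinarith
      rw [tent_right hxh hx1'']
      set j' : ℕ := 2 ^ (L+1+1) - 1 - j with hj'
      have hpow : (1:ℕ) ≤ 2^(L+1+1) := Nat.one_le_two_pow
      have hj'c : (j' : ℝ) = 2 * P - 1 - j := by
        rw [hj', Nat.cast_sub (by omega : j ≤ 2^(L+1+1) - 1), Nat.cast_sub hpow]
        push_cast
        try rw [hPP]
        try push_cast
        try ring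
      have hj'lt : j' < 2 ^ (L+1) := by
        rw [hj']
        have h1 : 2^(L+1+1) = 2 * 2^(L+1) := by ring
        omega
      have := ih j' hj'lt (2 - 2*x)
        (by rw [div_le_iff₀ hPpos, hj'c]; nlinarith)
        (by rw [le_div_iff₀ hPpos, hj'c]; nlinarith)
      rw [this]
      have hpar : Even j' ↔ ¬ Even j := by
        rw [hj']
        simp only [Nat.even_iff]
        have h1 : 2^(L+1+1) = 2 * 2^(L+1) := by ring
        omega
      rcases Classical.em (Even j) with hje | hje
      · rw [if_neg (by rw [hpar]; exact fun h => h hje), if_pos hje, hj'c, hPP]; ring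
      · rw [if_pos (hpar.mpr hje), if_neg hje, hj'c, hPP]; ring



/-- `g` is affine on `[a,b]`. -/
def AffOn (g : ℝ → ℝ) (a b : ℝ) : Prop :=
  ∃ c d : ℝ, ∀ x ∈ Set.Icc a b, g x = c + d * x

namespace AffOn

lemma mono {g : ℝ → ℝ} {a b a' b' : ℝ} (h : AffOn g a b) (h1 : a ≤ a') (h2 : b' ≤ b) :
    AffOn g a' b' :=
  let ⟨c, d, hcd⟩ := h
  ⟨c, d, fun x hx => hcd x ⟨h1.trans hx.1, hx.2.trans h2⟩⟩

lemma of_degenerate {g : ℝ → ℝ} {a b : ℝ} (h : b ≤ a) : AffOn g a b :=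
  ⟨g b, 0, fun x hx => by
    have : x = b := le_antisymm hx.2 (h.trans hx.1)
    rw [this]; ring⟩

lemma const {a b β : ℝ} : AffOn (fun _ => β) a b := ⟨β, 0, fun x _ => by ring⟩

lemma add {g h : ℝ → ℝ} {a b : ℝ} (hg : AffOn g a b) (hh : AffOn h a b) :
    AffOn (fun t => g t + h t) a b := by
  obtain ⟨c, d, hcd⟩ := hg
  obtain ⟨c', d', hcd'⟩ := hh
  exact ⟨c + c', d + d', fun x hx => by show g x + h x = _; rw [hcd x hx, hcd' x hx]; ring⟩

lemma const_mul {g : ℝ → ℝ} {a b β : ℝ} (hg : AffOn g a b) :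
    AffOn (fun t => β * g t) a b := by
  obtain ⟨c, d, hcd⟩ := hg
  exact ⟨β * c, β * d, fun x hx => by show β * g x = _; rw [hcd x hx]; ring⟩

lemma sum {ι : Type*} {s : Finset ι} {F : ι → ℝ → ℝ} {a b : ℝ}
    (h : ∀ i ∈ s, AffOn (F i) a b) : AffOn (fun t => ∑ i ∈ s, F i t) a b := by
  classical
  induction s using Finset.induction_on with
  | empty => simpa using const
  | insert _ _ hni ih =>
    rename_i i s
    simp only [Finset.sum_insert hni]
    exact add (h i (Finset.mem_insert_self i s))
      (ih fun j hj => h j (Finset.mem_insert_of_mem hj))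

lemma add_const {g : ℝ → ℝ} {a b β : ℝ} (hg : AffOn g a b) :
    AffOn (fun t => g t + β) a b := hg.add const

lemma relu_comp_of_nonneg {g : ℝ → ℝ} {a b : ℝ} (hg : AffOn g a b)
    (h : ∀ x ∈ Set.Icc a b, 0 ≤ g x) : AffOn (fun t => relu (g t)) a b := by
  obtain ⟨c, d, hcd⟩ := hg
  exact ⟨c, d, fun x hx => by show relu (g x) = _; rw [relu_of_nonneg (h x hx), hcd x hx]⟩

lemma relu_comp_of_nonpos {g : ℝ → ℝ} {a b : ℝ} (h : ∀ x ∈ Set.Icc a b, g x ≤ 0) :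
    AffOn (fun t => relu (g t)) a b :=
  ⟨0, 0, fun x hx => by show relu (g x) = _; rw [relu_of_nonpos (h x hx)]; ring⟩

end AffOn

/-- `Subdiv P a b N`: `[a,b]` can be divided into at most `N` intervals each satisfying `P`. -/
inductive Subdiv (P : ℝ → ℝ → Prop) : ℝ → ℝ → ℕ → Prop where
  | base {a b : ℝ} (hab : a ≤ b) (h : P a b) : Subdiv P a b 1
  | glue {a m b : ℝ} {N M : ℕ} (h1 : Subdiv P a m N) (h2 : Subdiv P m b M) :
      Subdiv P a b (N + M)

namespace Subdiv

lemma le_of {P : ℝ → ℝ → Prop} {a b : ℝ} {N : ℕ} (h : Subdiv P a b N) : a ≤ b := by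
  induction h with
  | base hab _ => exact hab
  | glue h1 h2 ih1 ih2 => exact ih1.trans ih2

lemma mono_cells {P Q : ℝ → ℝ → Prop} {a b : ℝ} {N : ℕ} (h : Subdiv P a b N)
    (hPQ : ∀ u v, a ≤ u → u ≤ v → v ≤ b → P u v → Q u v) : Subdiv Q a b N := by
  induction h with
  | base hab hp => exact base hab (hPQ _ _ le_rfl hab le_rfl hp)
  | @glue a m b N M h1 h2 ih1 ih2 =>
    exact glue (ih1 fun u v hu huv hv hp => hPQ u v hu huv (hv.trans h2.le_of) hp)
      (ih2 fun u v hu huv hv hp => hPQ u v (h1.le_of.trans hu) huv hv hp)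

lemma pad {P : ℝ → ℝ → Prop} {a b : ℝ} {N : ℕ} (hP : ∀ x, P x x) (h : Subdiv P a b N) :
    Subdiv P a b (N + 1) := glue h (base le_rfl (hP b))

lemma mono_nat {P : ℝ → ℝ → Prop} {a b : ℝ} {N M : ℕ} (hP : ∀ x, P x x)
    (h : Subdiv P a b N) (hNM : N ≤ M) : Subdiv P a b M := by
  induction M, hNM using Nat.le_induction with
  | base => exact h
  | succ M _ ih => exact ih.pad hP

lemma refine {P Q : ℝ → ℝ → Prop} {a b : ℝ} {N K : ℕ} (h : Subdiv P a b N)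
    (href : ∀ p q, a ≤ p → p ≤ q → q ≤ b → P p q → Subdiv Q p q K) :
    Subdiv Q a b (N * K) := by
  induction h with
  | base hab hp => rw [one_mul]; exact href _ _ le_rfl hab le_rfl hp
  | @glue a m b N M h1 h2 ih1 ih2 =>
    rw [Nat.add_mul]
    exact glue (ih1 fun p q hp hpq hq => href p q hp hpq (hq.trans h2.le_of))
      (ih2 fun p q hp hpq hq => href p q (h1.le_of.trans hp) hpq hq)

lemma split {P : ℝ → ℝ → Prop} {a b : ℝ} {N : ℕ} (h : Subdiv P a b N)
    (hered : ∀ u v u' v', u ≤ u' → u' ≤ v' → v' ≤ v → P u v → P u' v')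
    {z : ℝ} (hz1 : a ≤ z) (hz2 : z ≤ b) :
    ∃ N₁ N₂ : ℕ, N₁ + N₂ ≤ N + 1 ∧ Subdiv P a z N₁ ∧ Subdiv P z b N₂ := by
  induction h with
  | @base a b hab hp =>
    exact ⟨1, 1, by omega, base hz1 (hered _ _ _ _ le_rfl hz1 hz2 hp),
      base hz2 (hered _ _ _ _ hz1 hz2 le_rfl hp)⟩
  | @glue a m b N M h1 h2 ih1 ih2 =>
    rcases le_total z m with hzm | hmz
    · obtain ⟨N₁, N₂, hsum, s1, s2⟩ := ih1 hz1 hzm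
      exact ⟨N₁, N₂ + M, by omega, s1, glue s2 h2⟩
    · obtain ⟨N₁, N₂, hsum, s1, s2⟩ := ih2 hmz hz2
      exact ⟨N + N₁, N₂, by omega, glue h1 s1, s2⟩

end Subdiv

/-- An affine function composed with `relu` has a single crossing point. -/
lemma exists_crossing {g : ℝ → ℝ} {p q : ℝ} (hpq : p ≤ q) (hg : AffOn g p q) :
    ∃ z, p ≤ z ∧ z ≤ q ∧
      (∀ u v, p ≤ u → v ≤ z → AffOn (fun t => relu (g t)) u v) ∧
      (∀ u v, z ≤ u → v ≤ q → AffOn (fun t => relu (g t)) u v) := by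
  obtain ⟨c, d, hcd⟩ := hg
  by_cases hd : d = 0
  · -- constant
    refine ⟨p, le_rfl, hpq, ?_, ?_⟩
    · intro u v hu hv
      exact AffOn.of_degenerate (hv.trans hu)
    · intro u v hu hv
      rcases le_total v u with hvu | huv
      · exact AffOn.of_degenerate hvu
      refine ⟨relu c, 0, fun x hx => ?_⟩
      show relu (g x) = _
      have := hcd x ⟨hu.trans hx.1, hx.2.trans hv⟩
      rw [hd] at this
      rw [this]; ring
  · have hcz : c + d * (-c / d) = 0 := by field_simp; ring
    set z₀ : ℝ := -c / d
    set z : ℝ := max p (min q z₀) with hzdef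
    have hpz : p ≤ z := le_max_left _ _
    have hzq : z ≤ q := max_le hpq (min_le_left _ _)
    refine ⟨z, hpz, hzq, ?_, ?_⟩
    · -- left of z
      intro u v hu hv
      rcases le_total v u with hvu | huv
      · exact AffOn.of_degenerate hvu
      rcases le_total p (min q z₀) with hple | hple
      · have hz : z = min q z₀ := max_eq_right hple
        rw [hz] at hv
        have hsub : ∀ x ∈ Set.Icc u v, x ∈ Set.Icc p q :=
          fun x hx => ⟨hu.trans hx.1, hx.2.trans (hv.trans (min_le_left _ _))⟩
        have hxz : ∀ x ∈ Set.Icc u v, x ≤ z₀ :=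
          fun x hx => hx.2.trans (hv.trans (min_le_right _ _))
        rcases lt_or_gt_of_ne hd with hdneg | hdpos
        · -- d < 0 : g ≥ 0 left of z₀
          refine AffOn.relu_comp_of_nonneg ⟨c, d, fun x hx => hcd x (hsub x hx)⟩ ?_
          intro x hx
          rw [hcd x (hsub x hx)]
          nlinarith [hxz x hx]
        · -- d > 0 : g ≤ 0 left of z₀
          refine AffOn.relu_comp_of_nonpos ?_
          intro x hx
          rw [hcd x (hsub x hx)]
          nlinarith [hxz x hx]
      · have hz : z = p := max_eq_left hple
        rw [hz] at hv
        exact AffOn.of_degenerate (hv.trans hu)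
    · -- right of z
      intro u v hu hv
      rcases le_total v u with hvu | huv
      · exact AffOn.of_degenerate hvu
      rcases le_total z₀ q with hz₀q | hz₀q
      · have hz : z = max p z₀ := by rw [hzdef, min_eq_right hz₀q]
        rw [hz] at hu
        have hsub : ∀ x ∈ Set.Icc u v, x ∈ Set.Icc p q :=
          fun x hx => ⟨(le_max_left p z₀).trans (hu.trans hx.1), hx.2.trans hv⟩
        have hxz : ∀ x ∈ Set.Icc u v, z₀ ≤ x :=
          fun x hx => (le_max_right p z₀).trans (hu.trans hx.1)
        rcases lt_or_gt_of_ne hd with hdneg | hdpos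
        · refine AffOn.relu_comp_of_nonpos ?_
          intro x hx
          rw [hcd x (hsub x hx)]
          nlinarith [hxz x hx]
        · refine AffOn.relu_comp_of_nonneg ⟨c, d, fun x hx => hcd x (hsub x hx)⟩ ?_
          intro x hx
          rw [hcd x (hsub x hx)]
          nlinarith [hxz x hx]
      · have hz : z = q := by rw [hzdef, min_eq_left hz₀q, max_eq_right hpq]
        rw [hz] at hu
        exact AffOn.of_degenerate (hv.trans hu)

/-- One ReLU layer refines a cell on which the pre-activations are affine into
at most `w + 1` subcells. -/
lemma layer_subdiv (w : ℕ) (A : ℕ → ℝ → ℝ) (a b : ℝ) (hab : a ≤ b)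
    (h : ∀ r < w, AffOn (A r) a b) :
    Subdiv (fun u v => ∀ r < w, AffOn (fun t => relu (A r t)) u v) a b (w + 1) := by
  induction w with
  | zero => exact .base hab (fun r hr => absurd hr (Nat.not_lt_zero r))
  | succ w ih =>
    have Hw := ih (fun r hr => h r (hr.trans (Nat.lt_succ_self w)))
    obtain ⟨z, hz1, hz2, hzL, hzR⟩ := exists_crossing hab (h w (Nat.lt_succ_self w))
    have hered : ∀ u v u' v' : ℝ, u ≤ u' → u' ≤ v' → v' ≤ v →
        (∀ r < w, AffOn (fun t => relu (A r t)) u v) →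
        (∀ r < w, AffOn (fun t => relu (A r t)) u' v') :=
      fun u v u' v' h1 _ h3 hp r hr => (hp r hr).mono h1 h3
    obtain ⟨N₁, N₂, hsum, s1, s2⟩ := Hw.split hered hz1 hz2
    have s1' : Subdiv (fun u v => ∀ r < w + 1, AffOn (fun t => relu (A r t)) u v) a z N₁ := by
      refine s1.mono_cells fun u v hu huv hv hp r hr => ?_
      rcases Nat.lt_succ_iff_lt_or_eq.1 hr with hr | hr
      · exact hp r hr
      · subst hr; exact hzL u v hu hv
    have s2' : Subdiv (fun u v => ∀ r < w + 1, AffOn (fun t => relu (A r t)) u v) z b N₂ := by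
      refine s2.mono_cells fun u v hu huv hv hp r hr => ?_
      rcases Nat.lt_succ_iff_lt_or_eq.1 hr with hr | hr
      · exact hp r hr
      · subst hr; exact hzR u v hu hv
    exact (s1'.glue s2').mono_nat
      (fun x r hr => AffOn.of_degenerate le_rfl) (by omega)


/-! ### Networks: continuity and piece counting -/

lemma continuous_hidden (net : NeuralNet) (i : ℕ) :
    ∀ r, Continuous fun x : ℕ → ℝ => net.hidden relu x i r := by
  induction i with
  | zero => exact fun r => continuous_apply r
  | succ i ih =>
    intro r
    have heq : (fun x : ℕ → ℝ => net.hidden relu x (i+1) r) = fun x : ℕ → ℝ =>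
        relu ((∑ c ∈ Finset.range (net.dims i),
          net.weight (i+1) r c * net.hidden relu x i c) + net.bias (i+1) r) := rfl
    rw [heq]
    exact continuous_relu.comp
      ((continuous_finset_sum _ fun c _ => continuous_const.mul (ih c)).add continuous_const)

lemma continuous_output (net : NeuralNet) : Continuous fun x : ℕ → ℝ => net.output relu x := by
  unfold NeuralNet.output
  exact (continuous_finset_sum _ fun c _ =>
    continuous_const.mul (continuous_hidden net _ c)).add continuous_const

lemma hidden_subdiv (net : NeuralNet) (p q : ℕ → ℝ) (i : ℕ) :
    Subdiv (fun u v => ∀ r < net.dims i,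
      AffOn (fun t => net.hidden relu (fun j => p j + q j * t) i r) u v) 0 1
      (∏ j ∈ Finset.Icc 1 i, (net.dims j + 1)) := by
  induction i with
  | zero =>
    rw [show Finset.Icc 1 0 = (∅ : Finset ℕ) from Finset.Icc_eq_empty (by omega),
      Finset.prod_empty]
    exact Subdiv.base zero_le_one fun r _ => ⟨p r, q r, fun x _ => rfl⟩
  | succ i ih =>
    rw [Finset.prod_Icc_succ_top (by omega : 1 ≤ i + 1)]
    refine ih.refine fun u' v' _ huv' _ hcell => ?_
    have hpre : ∀ r < net.dims (i+1), AffOn (fun t =>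
        (∑ c ∈ Finset.range (net.dims i), net.weight (i+1) r c *
          net.hidden relu (fun j => p j + q j * t) i c) + net.bias (i+1) r) u' v' := by
      intro r _
      exact AffOn.add_const (AffOn.sum fun c hc =>
        AffOn.const_mul (hcell c (Finset.mem_range.1 hc)))
    exact layer_subdiv _ _ u' v' huv' hpre

lemma output_subdiv (net : NeuralNet) (p q : ℕ → ℝ) :
    Subdiv (fun u v => AffOn (fun t => net.output relu (fun j => p j + q j * t)) u v) 0 1
      (∏ j ∈ Finset.Icc 1 (net.depth - 1), (net.dims j + 1)) := by
  refine (hidden_subdiv net p q (net.depth - 1)).mono_cells fun u v _ _ _ hcell => ?_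
  exact AffOn.add_const (AffOn.sum fun c hc =>
    AffOn.const_mul (hcell c (Finset.mem_range.1 hc)))

lemma prod_dims_le (net : NeuralNet) (k : ℕ) (hd : net.depth ≤ k)
    (hn : net.totalNodes ≤ 2 ^ k) :
    (∏ j ∈ Finset.Icc 1 (net.depth - 1), (net.dims j + 1)) ≤ 2 ^ (k * k) := by
  have h1 : ∀ j ∈ Finset.Icc 1 (net.depth - 1), net.dims j + 1 ≤ 2^k + 1 := by
    intro j hj
    have := Finset.single_le_sum (f := net.dims) (fun i _ => Nat.zero_le _) hj
    unfold NeuralNet.totalNodes at hn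
    omega
  have hcard : (Finset.Icc 1 (net.depth - 1)).card = net.depth - 1 := by
    rw [Nat.card_Icc]; omega
  calc (∏ j ∈ Finset.Icc 1 (net.depth - 1), (net.dims j + 1))
      ≤ ∏ _j ∈ Finset.Icc 1 (net.depth - 1), (2^k + 1) := Finset.prod_le_prod' h1
    _ = (2^k + 1) ^ (net.depth - 1) := by rw [Finset.prod_const, hcard]
    _ ≤ (2^(k+1)) ^ (net.depth - 1) := Nat.pow_le_pow_left (by
        have : 1 ≤ 2^k := Nat.one_le_two_pow
        have : 2^(k+1) = 2 * 2^k := by ring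
        omega) _
    _ ≤ (2^(k+1)) ^ (k - 1) := Nat.pow_le_pow_right (by positivity) (by omega)
    _ = 2 ^ ((k+1) * (k-1)) := by rw [← pow_mul]
    _ ≤ 2 ^ (k*k) := Nat.pow_le_pow_right (by norm_num) (by
        rcases k with _ | k'
        · simp
        · simp only [Nat.add_sub_cancel]
          nlinarith)


/-! ### Per-tooth integral bound -/

lemma integral_affine (α β p q : ℝ) (hpq : p ≤ q) :
    ∫ x in Set.Ioc p q, (α + β * x) = α * (q - p) + β * ((q^2 - p^2)/2) := by
  rw [← intervalIntegral.integral_of_le hpq,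
    intervalIntegral.integral_add intervalIntegrable_const
      ((by fun_prop : Continuous fun x : ℝ => β * x).intervalIntegrable p q),
    intervalIntegral.integral_const, intervalIntegral.integral_const_mul, integral_id]
  simp; ring

/-- Any affine function is at `L¹`-distance at least `w/4` from a unit-height tent of
width `w` on `(a, a+w]`. -/
lemma tooth_bound {f g : ℝ → ℝ} {a w : ℝ} (hw : 0 < w)
    (hf1 : ∀ x ∈ Set.Icc a (a + w/2), f x = (2/w) * (x - a))
    (hf2 : ∀ x ∈ Set.Icc (a + w/2) (a + w), f x = (2/w) * ((a + w) - x))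
    (hg : AffOn g a (a + w))
    (hint : IntegrableOn (fun x => |f x - g x|) (Set.Ioc a (a + w))) :
    w/4 ≤ ∫ x in Set.Ioc a (a + w), |f x - g x| := by
  obtain ⟨c, d, hcd⟩ := hg
  set q0 := a with hq0
  set q1 := a + w/4 with hq1
  set q2 := a + w/2 with hq2
  set q3 := a + 3*(w/4) with hq3
  set q4 := a + w with hq4
  have h01 : q0 ≤ q1 := by rw [hq0, hq1]; linarith
  have h12 : q1 ≤ q2 := by rw [hq1, hq2]; linarith
  have h23 : q2 ≤ q3 := by rw [hq2, hq3]; linarith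
  have h34 : q3 ≤ q4 := by rw [hq3, hq4]; linarith
  -- the four subintegrals of u
  have hmem : ∀ {p q : ℝ}, q0 ≤ p → q ≤ q4 → Set.Ioc p q ⊆ Set.Icc q0 q4 :=
    fun hp hq x hx => ⟨hp.trans hx.1.le, hx.2.trans hq⟩
  have hV1 : ∫ x in Set.Ioc q0 q1, (f x - g x) =
      ((-(2/w))*a - c) * (q1 - q0) + (2/w - d) * ((q1^2 - q0^2)/2) := by
    rw [setIntegral_congr_fun measurableSet_Ioc (g := fun x => ((-(2/w))*a - c) + (2/w - d) * x)
      (fun x hx => by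
        rw [hf1 x ⟨hx.1.le, by rw [hq2]; exact hx.2.trans (by rw [hq1]; linarith)⟩,
          hcd x ⟨hx.1.le, hx.2.trans (by rw [hq1, hq4]; linarith)⟩]
        ring)]
    exact integral_affine _ _ _ _ h01
  have hV2 : ∫ x in Set.Ioc q1 q2, (f x - g x) =
      ((-(2/w))*a - c) * (q2 - q1) + (2/w - d) * ((q2^2 - q1^2)/2) := by
    rw [setIntegral_congr_fun measurableSet_Ioc (g := fun x => ((-(2/w))*a - c) + (2/w - d) * x)
      (fun x hx => by
        rw [hf1 x ⟨(le_trans (by rw [hq1]; linarith) hx.1.le), hx.2⟩,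
          hcd x ⟨le_trans (by rw [hq1]; linarith) hx.1.le,
            hx.2.trans (by rw [hq2, hq4]; linarith)⟩]
        ring)]
    exact integral_affine _ _ _ _ h12
  have hV3 : ∫ x in Set.Ioc q2 q3, (f x - g x) =
      ((2/w)*(a+w) - c) * (q3 - q2) + (-(2/w) - d) * ((q3^2 - q2^2)/2) := by
    rw [setIntegral_congr_fun measurableSet_Ioc (g := fun x => ((2/w)*(a+w) - c) + (-(2/w) - d) * x)
      (fun x hx => by
        rw [hf2 x ⟨hx.1.le, hx.2.trans (by rw [hq3, hq4]; linarith)⟩,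
          hcd x ⟨le_trans (by rw [hq2]; linarith) hx.1.le,
            hx.2.trans (by rw [hq3, hq4]; linarith)⟩]
        ring)]
    exact integral_affine _ _ _ _ h23
  have hV4 : ∫ x in Set.Ioc q3 q4, (f x - g x) =
      ((2/w)*(a+w) - c) * (q4 - q3) + (-(2/w) - d) * ((q4^2 - q3^2)/2) := by
    rw [setIntegral_congr_fun measurableSet_Ioc (g := fun x => ((2/w)*(a+w) - c) + (-(2/w) - d) * x)
      (fun x hx => by
        rw [hf2 x ⟨le_trans (by rw [hq2, hq3]; linarith) hx.1.le, hx.2⟩,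
          hcd x ⟨le_trans (by rw [hq3]; linarith) hx.1.le, hx.2⟩]
        ring)]
    exact integral_affine _ _ _ _ h34
  -- splitting of the absolute integral
  have hi : ∀ {p q : ℝ}, q0 ≤ p → q ≤ q4 →
      IntegrableOn (fun x => |f x - g x|) (Set.Ioc p q) := by
    intro p q hp hq
    exact hint.mono_set (fun x hx => ⟨lt_of_le_of_lt hp hx.1, hx.2.trans hq⟩)
  have hsplit : ∫ x in Set.Ioc q0 q4, |f x - g x| =
      (∫ x in Set.Ioc q0 q1, |f x - g x|) + (∫ x in Set.Ioc q1 q2, |f x - g x|)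
      + (∫ x in Set.Ioc q2 q3, |f x - g x|) + (∫ x in Set.Ioc q3 q4, |f x - g x|) := by
    rw [← Set.Ioc_union_Ioc_eq_Ioc h01 (h12.trans (h23.trans h34)),
      setIntegral_union (Set.Ioc_disjoint_Ioc_of_le le_rfl) measurableSet_Ioc
        (hi le_rfl (by linarith)) (hi (by linarith) le_rfl),
      ← Set.Ioc_union_Ioc_eq_Ioc h12 (h23.trans h34),
      setIntegral_union (Set.Ioc_disjoint_Ioc_of_le le_rfl) measurableSet_Ioc
        (hi (by linarith) (by linarith)) (hi (by linarith) le_rfl),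
      ← Set.Ioc_union_Ioc_eq_Ioc h23 h34,
      setIntegral_union (Set.Ioc_disjoint_Ioc_of_le le_rfl) measurableSet_Ioc
        (hi (by linarith) (by linarith)) (hi (by linarith) le_rfl)]
    ring
  have habs : ∀ {p q : ℝ}, |∫ x in Set.Ioc p q, (f x - g x)| ≤
      ∫ x in Set.Ioc p q, |f x - g x| := by
    intro p q
    have := MeasureTheory.norm_integral_le_integral_norm (μ := volume.restrict (Set.Ioc p q))
      (fun x => f x - g x)
    simpa [Real.norm_eq_abs] using this
  have e1 := abs_le.1 (habs (p := q0) (q := q1))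
  have e2 := abs_le.1 (habs (p := q1) (q := q2))
  have e3 := abs_le.1 (habs (p := q2) (q := q3))
  have e4 := abs_le.1 (habs (p := q3) (q := q4))
  have key : -(∫ x in Set.Ioc q0 q1, (f x - g x)) + (∫ x in Set.Ioc q1 q2, (f x - g x))
      + (∫ x in Set.Ioc q2 q3, (f x - g x)) - (∫ x in Set.Ioc q3 q4, (f x - g x)) = w/4 := by
    rw [hV1, hV2, hV3, hV4, hq0, hq1, hq2, hq3, hq4]
    field_simp
    ring
  rw [hsplit]
  linarith [e1.1, e1.2, e2.1, e2.2, e3.1, e3.2, e4.1, e4.2]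


/-! ### Counting teeth against a subdivision -/

lemma tooth_formula_left (L i : ℕ) (hi : i < 2^L) :
    ∀ x ∈ Set.Icc ((i:ℝ)*(1/2^L)) ((i:ℝ)*(1/2^L) + (1/2^L)/2),
    tent^[L+1] x = (2/(1/2^L)) * (x - (i:ℝ)*(1/2^L)) := by
  intro x hx
  have hp : (0:ℝ) < 2^L := by positivity
  have hp1 : (0:ℝ) < 2^(L+1) := by positivity
  have e1 : ((2*i : ℕ) : ℝ)/2^(L+1) = (i:ℝ)*(1/2^L) := by
    push_cast; rw [pow_succ]; field_simp
  have e2 : (((2*i : ℕ) : ℝ) + 1)/2^(L+1) = (i:ℝ)*(1/2^L) + (1/2^L)/2 := by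
    push_cast; rw [pow_succ]; field_simp
  have := sawtooth_formula L (2*i) (by have := Nat.pow_lt_pow_succ (a := 2) (n := L) ?_ <;> omega)
    x (by rw [e1]; exact hx.1) (by rw [e2]; exact hx.2)
  rw [this, if_pos (even_two_mul i)]
  push_cast
  rw [pow_succ]
  field_simp

lemma tooth_formula_right (L i : ℕ) (hi : i < 2^L) :
    ∀ x ∈ Set.Icc ((i:ℝ)*(1/2^L) + (1/2^L)/2) ((i:ℝ)*(1/2^L) + (1/2^L)),
    tent^[L+1] x = (2/(1/2^L)) * (((i:ℝ)*(1/2^L) + (1/2^L)) - x) := by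
  intro x hx
  have hp : (0:ℝ) < 2^L := by positivity
  have e1 : ((2*i+1 : ℕ) : ℝ)/2^(L+1) = (i:ℝ)*(1/2^L) + (1/2^L)/2 := by
    push_cast; rw [pow_succ]; field_simp
  have e2 : (((2*i+1 : ℕ) : ℝ) + 1)/2^(L+1) = (i:ℝ)*(1/2^L) + (1/2^L) := by
    push_cast; rw [pow_succ]; field_simp; ring
  have := sawtooth_formula L (2*i+1) (by
      have : 2^(L+1) = 2*2^L := by ring
      omega)
    x (by rw [e1]; exact hx.1) (by rw [e2]; exact hx.2)
  rw [this, if_neg (by simp [Nat.even_add_one, parity_simps])]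
  push_cast
  rw [pow_succ]
  field_simp
  ring

lemma tooth_subset {L i : ℕ} {a b : ℝ} (hia : a ≤ (i:ℝ)*(1/2^L))
    (hib : (i:ℝ)*(1/2^L) + (1/2^L) ≤ b) :
    Set.Ioc ((i:ℝ)*(1/2^L)) ((i:ℝ)*(1/2^L) + (1/2^L)) ⊆ Set.Ioc a b :=
  fun x hx => ⟨lt_of_le_of_lt hia hx.1, hx.2.trans hib⟩

lemma teeth_le {L : ℕ} {i i' : ℕ} (hlt : i < i') :
    (i:ℝ)*(1/2^L) + (1/2^L) ≤ (i':ℝ)*(1/2^L) := by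
  have hw : (0:ℝ) ≤ (1/2^L : ℝ) := by positivity
  have : ((i:ℝ) + 1) ≤ (i':ℝ) := by exact_mod_cast hlt
  nlinarith

lemma counting (L : ℕ) (h : ℝ → ℝ)
    (hint : IntegrableOn (fun x => |tent^[L+1] x - h x|) (Set.Ioc 0 1)) :
    ∀ (a b : ℝ) (N : ℕ), Subdiv (AffOn h) a b N → 0 ≤ a → b ≤ 1 →
    ((((Finset.range (2^L)).filter
        (fun i : ℕ => a ≤ (i:ℝ)*(1/2^L) ∧ (i:ℝ)*(1/2^L) + (1/2^L) ≤ b)).card : ℝ) + 1 - (N:ℝ))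
      * ((1/2^L)/4) ≤ ∫ x in Set.Ioc a b, |tent^[L+1] x - h x| := by
  intro a b N hsub
  induction hsub with
  | @base a b hab hp =>
    intro ha hb
    have hw : (0:ℝ) < (1/2^L : ℝ) := by positivity
    have hp2 : (0:ℝ) < 2^L := by positivity
    set S := (Finset.range (2^L)).filter
        (fun i : ℕ => a ≤ (i:ℝ)*(1/2^L) ∧ (i:ℝ)*(1/2^L) + (1/2^L) ≤ b) with hS
    have hmemS : ∀ i ∈ S, i < 2^L ∧ a ≤ (i:ℝ)*(1/2^L) ∧ (i:ℝ)*(1/2^L) + (1/2^L) ≤ b := by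
      intro i hi
      rw [hS, Finset.mem_filter, Finset.mem_range] at hi
      exact ⟨hi.1, hi.2.1, hi.2.2⟩
    have hsub01 : Set.Ioc a b ⊆ Set.Ioc 0 1 := fun x hx =>
      ⟨lt_of_le_of_lt ha hx.1, hx.2.trans hb⟩
    have hintab : IntegrableOn (fun x => |tent^[L+1] x - h x|) (Set.Ioc a b) :=
      hint.mono_set hsub01
    have htooth : ∀ i ∈ S, (1/2^L)/4 ≤ ∫ x in
        Set.Ioc ((i:ℝ)*(1/2^L)) ((i:ℝ)*(1/2^L) + (1/2^L)), |tent^[L+1] x - h x| := by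
      intro i hi
      obtain ⟨hiR, hia, hib⟩ := hmemS i hi
      exact tooth_bound hw (tooth_formula_left L i hiR) (tooth_formula_right L i hiR)
        (hp.mono hia hib) (hintab.mono_set (tooth_subset hia hib))
    have hdisj : Set.Pairwise (↑S)
        ((Function.onFun Disjoint fun i : ℕ => Set.Ioc ((i:ℝ)*(1/2^L)) ((i:ℝ)*(1/2^L) + (1/2^L)))) := by
      intro i _ i' _ hne
      simp only [Function.onFun]
      rw [Set.Ioc_disjoint_Ioc]
      rcases Nat.lt_or_ge i i' with hlt | hge
      · exact le_trans (min_le_left _ _) (le_trans (teeth_le hlt) (le_max_right _ _))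
      · have hlt : i' < i := lt_of_le_of_ne hge (Ne.symm hne)
        exact le_trans (min_le_right _ _) (le_trans (teeth_le hlt) (le_max_left _ _))
    have hbiU : (⋃ i ∈ S, Set.Ioc ((i:ℝ)*(1/2^L)) ((i:ℝ)*(1/2^L) + (1/2^L))) ⊆ Set.Ioc a b :=
      Set.iUnion₂_subset fun i hi => tooth_subset (hmemS i hi).2.1 (hmemS i hi).2.2
    calc ((S.card : ℝ) + 1 - ((1:ℕ):ℝ)) * ((1/2^L)/4)
        = ∑ _i ∈ S, ((1/2^L)/4 : ℝ) := by
          rw [Finset.sum_const, nsmul_eq_mul]; push_cast; ring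
      _ ≤ ∑ i ∈ S, ∫ x in Set.Ioc ((i:ℝ)*(1/2^L)) ((i:ℝ)*(1/2^L) + (1/2^L)),
            |tent^[L+1] x - h x| := Finset.sum_le_sum htooth
      _ = ∫ x in ⋃ i ∈ S, Set.Ioc ((i:ℝ)*(1/2^L)) ((i:ℝ)*(1/2^L) + (1/2^L)),
            |tent^[L+1] x - h x| :=
          (integral_biUnion_finset S (fun i _ => measurableSet_Ioc) hdisj
            (fun i hi => hintab.mono_set
              (tooth_subset (hmemS i hi).2.1 (hmemS i hi).2.2))).symm
      _ ≤ ∫ x in Set.Ioc a b, |tent^[L+1] x - h x| :=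
          setIntegral_mono_set hintab
            (Filter.Eventually.of_forall fun x => abs_nonneg _)
            (HasSubset.Subset.eventuallyLE hbiU)
  | @glue a m b N M h1 h2 ih1 ih2 =>
    intro ha hb
    have ham : a ≤ m := h1.le_of
    have hmb : m ≤ b := h2.le_of
    have hm1 : m ≤ 1 := hmb.trans hb
    have h0m : 0 ≤ m := ha.trans ham
    have I1 := ih1 ha hm1
    have I2 := ih2 h0m hb
    have hw : (0:ℝ) < (1/2^L : ℝ) := by positivity
    set Sab := (Finset.range (2^L)).filter
        (fun i : ℕ => a ≤ (i:ℝ)*(1/2^L) ∧ (i:ℝ)*(1/2^L) + (1/2^L) ≤ b) with hSab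
    set Sam := (Finset.range (2^L)).filter
        (fun i : ℕ => a ≤ (i:ℝ)*(1/2^L) ∧ (i:ℝ)*(1/2^L) + (1/2^L) ≤ m) with hSam
    set Smb := (Finset.range (2^L)).filter
        (fun i : ℕ => m ≤ (i:ℝ)*(1/2^L) ∧ (i:ℝ)*(1/2^L) + (1/2^L) ≤ b) with hSmb
    have hcard : Sab.card ≤ Sam.card + Smb.card + 1 := by
      have hsplit : Sab ⊆ (Sam ∪ Smb) ∪ (Sab \ (Sam ∪ Smb)) := by
        intro i hi
        by_cases hmem : i ∈ Sam ∪ Smb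
        · exact Finset.mem_union_left _ hmem
        · exact Finset.mem_union_right _ (Finset.mem_sdiff.2 ⟨hi, hmem⟩)
      have hone : (Sab \ (Sam ∪ Smb)).card ≤ 1 := by
        rw [Finset.card_le_one]
        intro i hi i' hi'
        have hcond : ∀ jj : ℕ, jj ∈ Sab \ (Sam ∪ Smb) →
            (jj:ℝ)*(1/2^L) < m ∧ m < (jj:ℝ)*(1/2^L) + (1/2^L) := by
          intro jj hjj
          rw [Finset.mem_sdiff, Finset.mem_union] at hjj
          obtain ⟨hjab, hjnot⟩ := hjj
          rw [hSab, Finset.mem_filter] at hjab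
          have hjR := hjab.1
          have hja := hjab.2.1
          have hjb := hjab.2.2
          push_neg at hjnot
          obtain ⟨hn1, hn2⟩ := hjnot
          rw [hSam, Finset.mem_filter] at hn1
          rw [hSmb, Finset.mem_filter] at hn2
          constructor
          · by_contra hcon
            push_neg at hcon
            exact hn2 ⟨hjR, hcon, hjb⟩
          · by_contra hcon
            push_neg at hcon
            exact hn1 ⟨hjR, hja, hcon⟩
        obtain ⟨hi1, hi2⟩ := hcond i hi
        obtain ⟨hi1', hi2'⟩ := hcond i' hi'
        have c1 : (i:ℝ) < (i':ℝ) + 1 := by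
          have := hi1.trans hi2'
          nlinarith
        have c2 : (i':ℝ) < (i:ℝ) + 1 := by
          have := hi1'.trans hi2
          nlinarith
        have c1' : i < i' + 1 := by exact_mod_cast c1
        have c2' : i' < i + 1 := by exact_mod_cast c2
        omega
      calc Sab.card ≤ ((Sam ∪ Smb) ∪ (Sab \ (Sam ∪ Smb))).card :=
            Finset.card_le_card hsplit
        _ ≤ (Sam ∪ Smb).card + (Sab \ (Sam ∪ Smb)).card := Finset.card_union_le _ _
        _ ≤ (Sam.card + Smb.card) + 1 := by
            have := Finset.card_union_le Sam Smb
            omega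
    have hadd : ∫ x in Set.Ioc a b, |tent^[L+1] x - h x| =
        (∫ x in Set.Ioc a m, |tent^[L+1] x - h x|)
        + ∫ x in Set.Ioc m b, |tent^[L+1] x - h x| := by
      rw [← Set.Ioc_union_Ioc_eq_Ioc ham hmb,
        setIntegral_union (Set.Ioc_disjoint_Ioc_of_le le_rfl) measurableSet_Ioc
          (hint.mono_set fun x hx => ⟨lt_of_le_of_lt ha hx.1, hx.2.trans hm1⟩)
          (hint.mono_set fun x hx => ⟨lt_of_le_of_lt h0m hx.1, hx.2.trans hb⟩)]
    have hfac : ((Sab.card : ℝ) + 1 - ((N+M : ℕ):ℝ)) * ((1/2^L)/4) ≤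
        (((Sam.card : ℝ) + 1 - (N:ℝ)) + ((Smb.card : ℝ) + 1 - (M:ℝ))) * ((1/2^L)/4) := by
      apply mul_le_mul_of_nonneg_right _ (by positivity)
      have : (Sab.card : ℝ) ≤ (Sam.card : ℝ) + (Smb.card : ℝ) + 1 := by exact_mod_cast hcard
      push_cast
      linarith
    rw [hadd]
    calc ((Sab.card : ℝ) + 1 - ((N+M : ℕ):ℝ)) * ((1/2^L)/4)
        ≤ (((Sam.card : ℝ) + 1 - (N:ℝ)) + ((Smb.card : ℝ) + 1 - (M:ℝ))) * ((1/2^L)/4) := hfac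
      _ = ((Sam.card : ℝ) + 1 - (N:ℝ)) * ((1/2^L)/4)
          + ((Smb.card : ℝ) + 1 - (M:ℝ)) * ((1/2^L)/4) := by ring
      _ ≤ _ := add_le_add I1 I2

/-! ### The deep sawtooth network -/

def deepNet (n L : ℕ) : NeuralNet where
  depth := L + 1
  dims := fun i => if i = 0 then n else 2
  weight := fun i _r c => if i = 1 then (if c = 0 then 1 else 0)
    else (if c = 0 then 2 else if c = 1 then (-4 : ℝ) else 0)
  bias := fun _i r => if r = 1 then (-(1/2) : ℝ) else 0

lemma deepNet_hidden (n L : ℕ) (hn : 1 ≤ n) (x : ℕ → ℝ) (hx : x 0 ∈ Set.Icc (0:ℝ) 1) :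
    ∀ i : ℕ, (deepNet n L).hidden relu x (i+1) 0 = tent^[i] (x 0) ∧
      (deepNet n L).hidden relu x (i+1) 1 = relu (tent^[i] (x 0) - 1/2) := by
  intro i
  induction i with
  | zero =>
    have hdims : (deepNet n L).dims 0 = n := rfl
    have hsum : ∀ r : ℕ, (∑ c ∈ Finset.range ((deepNet n L).dims 0),
        (deepNet n L).weight 1 r c * (deepNet n L).hidden relu x 0 c) = x 0 := by
      intro r
      have : ∀ c ∈ Finset.range ((deepNet n L).dims 0),
          (deepNet n L).weight 1 r c * (deepNet n L).hidden relu x 0 c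
            = if c = 0 then x c else 0 := by
        intro c _
        by_cases hc : c = 0
        · simp [deepNet, hc, NeuralNet.hidden]
        · simp [deepNet, hc, NeuralNet.hidden]
      rw [Finset.sum_congr rfl this, Finset.sum_ite_eq' (Finset.range ((deepNet n L).dims 0)) 0]
      rw [if_pos]
      rw [hdims, Finset.mem_range]
      omega
    constructor
    · show relu ((∑ c ∈ Finset.range ((deepNet n L).dims 0),
        (deepNet n L).weight 1 0 c * (deepNet n L).hidden relu x 0 c) + (deepNet n L).bias 1 0)
        = tent^[0] (x 0)
      rw [hsum 0]
      have : (deepNet n L).bias 1 0 = 0 := rfl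
      rw [this, add_zero, Function.iterate_zero_apply]
      exact relu_of_nonneg hx.1
    · show relu ((∑ c ∈ Finset.range ((deepNet n L).dims 0),
        (deepNet n L).weight 1 1 c * (deepNet n L).hidden relu x 0 c) + (deepNet n L).bias 1 1)
        = relu (tent^[0] (x 0) - 1/2)
      rw [hsum 1]
      have : (deepNet n L).bias 1 1 = -(1/2) := rfl
      rw [this, Function.iterate_zero_apply]
      ring_nf
  | succ i ih =>
    obtain ⟨ih0, ih1⟩ := ih
    have hu : tent^[i] (x 0) ∈ Set.Icc (0:ℝ) 1 := tent_iterate_mem hx i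
    have hdims : (deepNet n L).dims (i+1) = 2 := rfl
    have hsum : ∀ r : ℕ, (∑ c ∈ Finset.range ((deepNet n L).dims (i+1)),
        (deepNet n L).weight (i+1+1) r c * (deepNet n L).hidden relu x (i+1) c)
          = tent (tent^[i] (x 0)) := by
      intro r
      rw [hdims, Finset.sum_range_succ, Finset.sum_range_one]
      have hw0 : (deepNet n L).weight (i+1+1) r 0 = 2 := by simp [deepNet]
      have hw1 : (deepNet n L).weight (i+1+1) r 1 = -4 := by simp [deepNet]
      rw [hw0, hw1, ih0, ih1]
      rw [show tent (tent^[i] (x 0)) = 2 * relu (tent^[i] (x 0))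
        - 4 * relu (tent^[i] (x 0) - 1/2) from rfl, relu_of_nonneg hu.1]
      ring
    constructor
    · show relu ((∑ c ∈ Finset.range ((deepNet n L).dims (i+1)),
        (deepNet n L).weight (i+1+1) 0 c * (deepNet n L).hidden relu x (i+1) c)
          + (deepNet n L).bias (i+1+1) 0) = tent^[i+1] (x 0)
      rw [hsum 0]
      have : (deepNet n L).bias (i+1+1) 0 = 0 := rfl
      rw [this, add_zero, Function.iterate_succ_apply']
      exact relu_of_nonneg (tent_mem hu).1
    · show relu ((∑ c ∈ Finset.range ((deepNet n L).dims (i+1)),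
        (deepNet n L).weight (i+1+1) 1 c * (deepNet n L).hidden relu x (i+1) c)
          + (deepNet n L).bias (i+1+1) 1) = relu (tent^[i+1] (x 0) - 1/2)
      rw [hsum 1]
      have : (deepNet n L).bias (i+1+1) 1 = -(1/2) := rfl
      rw [this, Function.iterate_succ_apply']
      ring_nf

lemma deepNet_output (n L : ℕ) (hn : 1 ≤ n) (hL : 1 ≤ L) (x : ℕ → ℝ)
    (hx : x 0 ∈ Set.Icc (0:ℝ) 1) :
    (deepNet n L).output relu x = tent^[L] (x 0) := by
  obtain ⟨L', rfl⟩ : ∃ L', L = L' + 1 := ⟨L - 1, by omega⟩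
  obtain ⟨ih0, ih1⟩ := deepNet_hidden n (L'+1) hn x hx L'
  show (∑ c ∈ Finset.range ((deepNet n (L'+1)).dims ((L'+1+1) - 1)),
      (deepNet n (L'+1)).weight (L'+1+1) 0 c
        * (deepNet n (L'+1)).hidden relu x ((L'+1+1) - 1) c)
      + (deepNet n (L'+1)).bias (L'+1+1) 0 = tent^[L'+1] (x 0)
  have hd : (L'+1+1) - 1 = L'+1 := by omega
  rw [hd]
  have hdims : (deepNet n (L'+1)).dims (L'+1) = 2 := rfl
  rw [hdims, Finset.sum_range_succ, Finset.sum_range_one]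
  have hw0 : (deepNet n (L'+1)).weight (L'+1+1) 0 0 = 2 := by simp [deepNet]
  have hw1 : (deepNet n (L'+1)).weight (L'+1+1) 0 1 = -4 := by simp [deepNet]
  have hb : (deepNet n (L'+1)).bias (L'+1+1) 0 = 0 := rfl
  rw [hw0, hw1, hb, ih0, ih1, add_zero]
  have hu : tent^[L'] (x 0) ∈ Set.Icc (0:ℝ) 1 := tent_iterate_mem hx L'
  rw [Function.iterate_succ_apply']
  rw [show tent (tent^[L'] (x 0)) = 2 * relu (tent^[L'] (x 0))
    - 4 * relu (tent^[L'] (x 0) - 1/2) from rfl, relu_of_nonneg hu.1]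
  ring

lemma deepNet_width (n L : ℕ) : (deepNet n L).width ≤ 2 := by
  unfold NeuralNet.width
  apply Finset.sup_le
  intro i hi
  rw [Finset.mem_Icc] at hi
  have : i ≠ 0 := by omega
  show (if i = 0 then n else 2) ≤ 2
  rw [if_neg this]

/-! ### Affine slices of the shallow network input -/

lemma slice_affine (m n' : ℕ) (cs : Fin m → ℝ) (y' : Fin n' → ℝ) (t : ℝ) (j : ℕ) :
    (if h : j < m + (n'+1) then (Fin.append cs (Fin.cons t y') ⟨j, h⟩ : ℝ) else 0)
      = (if h : j < m + (n'+1) then (Fin.append cs (Fin.cons 0 y') ⟨j, h⟩ : ℝ) else 0)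
        + (if j = m then 1 else 0) * t := by
  by_cases h : j < m + (n'+1)
  · rw [dif_pos h, dif_pos h]
    rcases lt_trichotomy j m with hj | hj | hj
    · have he : (⟨j, h⟩ : Fin (m + (n'+1))) = Fin.castAdd (n'+1) ⟨j, hj⟩ := by
        apply Fin.ext; rfl
      rw [he, Fin.append_left, Fin.append_left, if_neg (by omega)]
      ring
    · have he : (⟨j, h⟩ : Fin (m + (n'+1))) = Fin.natAdd m (0 : Fin (n'+1)) := by
        apply Fin.ext; simp [hj]
      rw [he, Fin.append_right, Fin.append_right, if_pos hj, Fin.cons_zero, Fin.cons_zero]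
      ring
    · have hjm : j - m - 1 < n' := by omega
      have he : (⟨j, h⟩ : Fin (m + (n'+1))) = Fin.natAdd m (Fin.succ ⟨j - m - 1, hjm⟩) := by
        apply Fin.ext
        show j = m + (j - m - 1 + 1)
        omega
      rw [he, Fin.append_right, Fin.append_right, Fin.cons_succ, Fin.cons_succ,
        if_neg (by omega)]
      ring
  · rw [dif_neg h, dif_neg h, if_neg (by omega)]
    ring

/-! ### Final numeric bounds -/

lemma pieces_le (k : ℕ) (hk : 1 ≤ k) (N : ℕ) (hN : N ≤ 2^(k*k)) :
    (N : ℝ) ≤ (2:ℝ)^(2*k^3) := by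
  calc (N:ℝ) ≤ ((2^(k*k) : ℕ) : ℝ) := by exact_mod_cast hN
    _ = (2:ℝ)^(k*k) := by push_cast; ring
    _ ≤ (2:ℝ)^(2*k^3) := by
        apply pow_le_pow_right₀ (by norm_num)
        nlinarith

lemma final_numeric (k N : ℕ) (hk : 1 ≤ k) (hN : N ≤ 2^(k*k)) :
    (1:ℝ)/64 ≤ (((2^(2*k^3+6) : ℕ) : ℝ) + 1 - (N:ℝ))
      * ((1/2^(2*k^3+6))/4) := by
  have hA : ((2^(2*k^3+6) : ℕ) : ℝ) = (2:ℝ)^(2*k^3+6) := by push_cast; ring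
  have hA64 : (2:ℝ)^(2*k^3+6) = 64 * (2:ℝ)^(2*k^3) := by
    rw [pow_add]; norm_num; ring
  have hNle : (N:ℝ) ≤ (2:ℝ)^(2*k^3) := pieces_le k hk N hN
  rw [hA]
  have h1 : 63 * (2:ℝ)^(2*k^3) ≤ (2:ℝ)^(2*k^3+6) + 1 - N := by
    rw [hA64]; linarith
  calc (1:ℝ)/64 ≤ (63 * (2:ℝ)^(2*k^3)) * ((1/2^(2*k^3+6))/4) := by
        have hB : (0:ℝ) < (2:ℝ)^(2*k^3) := by positivity
        have he : (63 * (2:ℝ)^(2*k^3)) * ((1/2^(2*k^3+6))/4) = 63/256 := by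
          rw [hA64]; field_simp; ring
        rw [he]; norm_num
    _ ≤ _ := mul_le_mul_of_nonneg_right h1 (by positivity)

/-! ### The slice lower bound -/

lemma slice_lower_bound (k : ℕ) (hk : 1 ≤ k) (net : NeuralNet)
    (hdepth : net.depth ≤ k) (hnodes : net.totalNodes ≤ 2^k) (p q : ℕ → ℝ)
    (hint : IntegrableOn (fun t => |tent^[2*k^3+6+1] t
      - net.output relu (fun j => p j + q j * t)|) (Set.Ioc 0 1)) :
    (1:ℝ)/64 ≤ ∫ t in Set.Ioc (0:ℝ) 1,
      |tent^[2*k^3+6+1] t - net.output relu (fun j => p j + q j * t)| := by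
  have hsub := output_subdiv net p q
  have hNle := prod_dims_le net k hdepth hnodes
  have hcount := counting (2*k^3+6) (fun t => net.output relu (fun j => p j + q j * t))
    hint 0 1 _ hsub le_rfl le_rfl
  have hfull : ((Finset.range (2^(2*k^3+6))).filter
      (fun i : ℕ => (0:ℝ) ≤ (i:ℝ)*(1/2^(2*k^3+6))
        ∧ (i:ℝ)*(1/2^(2*k^3+6)) + (1/2^(2*k^3+6)) ≤ 1)) = Finset.range (2^(2*k^3+6)) := by
    apply Finset.filter_true_of_mem
    intro i hi
    rw [Finset.mem_range] at hi
    have hp2 : (0:ℝ) < 2^(2*k^3+6) := by positivity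
    constructor
    · positivity
    · have h1 : (i:ℝ) + 1 ≤ 2^(2*k^3+6) := by exact_mod_cast hi
      have h2 : (i:ℝ)*(1/2^(2*k^3+6)) + (1/2^(2*k^3+6)) = ((i:ℝ)+1)/2^(2*k^3+6) := by
        field_simp
      rw [h2, div_le_one hp2]
      exact h1
  rw [hfull, Finset.card_range] at hcount
  exact le_trans (final_numeric k _ hk hNle) hcount

lemma succAbove_zero_eq {n' : ℕ} (j : Fin n') : (0 : Fin (n'+1)).succAbove j = j.succ := by
  rw [Fin.succAbove_zero]

lemma insertNth_zero_eq_cons {n' : ℕ} (t : ℝ) (y' : Fin n' → ℝ) :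
    Fin.insertNth 0 t y' = (Fin.cons t y' : Fin (n'+1) → ℝ) := by
  funext i
  rcases Fin.eq_zero_or_eq_succ i with h | ⟨j, h⟩
  · subst h
    rw [Fin.insertNth_apply_same]
    exact (Fin.cons_zero (α := fun _ : Fin (n'+1) => ℝ) t y').symm
  · subst h
    rw [← succAbove_zero_eq j, Fin.insertNth_apply_succAbove, succAbove_zero_eq j]
    exact (Fin.cons_succ (α := fun _ : Fin (n'+1) => ℝ) t y' j).symm

lemma insertNth_mem_Icc {n' : ℕ} (t : ℝ) (y' : Fin n' → ℝ) :
    Fin.insertNth 0 t y' ∈ Set.Icc (0 : Fin (n'+1) → ℝ) 1 ↔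
      t ∈ Set.Icc (0:ℝ) 1 ∧ y' ∈ Set.Icc (0 : Fin n' → ℝ) 1 := by
  simp only [Set.mem_Icc, Pi.le_def]
  constructor
  · intro ⟨h0, h1⟩
    refine ⟨⟨?_, ?_⟩, ⟨fun j => ?_, fun j => ?_⟩⟩
    · have := h0 0
      rwa [Fin.insertNth_apply_same, Pi.zero_apply] at this
    · have := h1 0
      rwa [Fin.insertNth_apply_same, Pi.one_apply] at this
    · have := h0 ((0 : Fin (n'+1)).succAbove j)
      rwa [Fin.insertNth_apply_succAbove, Pi.zero_apply] at this
    · have := h1 ((0 : Fin (n'+1)).succAbove j)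
      rwa [Fin.insertNth_apply_succAbove, Pi.one_apply] at this
  · intro ⟨⟨ht0, ht1⟩, hy0, hy1⟩
    constructor
    · intro i
      rcases Fin.eq_zero_or_eq_succ i with h | ⟨j, h⟩
      · subst h
        rw [Fin.insertNth_apply_same, Pi.zero_apply]; exact ht0
      · subst h
        rw [Pi.zero_apply, ← succAbove_zero_eq j, Fin.insertNth_apply_succAbove]
        have := hy0 j
        rwa [Pi.zero_apply] at this
    · intro i
      rcases Fin.eq_zero_or_eq_succ i with h | ⟨j, h⟩
      · subst h
        rw [Fin.insertNth_apply_same, Pi.one_apply]; exact ht1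
      · subst h
        rw [Pi.one_apply, ← succAbove_zero_eq j, Fin.insertNth_apply_succAbove]
        have := hy1 j
        rwa [Pi.one_apply] at this


end S0
end S0

/-- depth separation for operator ReLU networks. -/
theorem statement0 (X : Type*) [NormedAddCommGroup X] [NormedSpace ℝ X] [CompleteSpace X]
    (K₁ : Set X) (hK₁ : IsCompact K₁) (V : Set C(K₁, ℝ)) (hV : IsCompact V) :
    ∃ C : ℕ, ∀ n k : ℕ, 1 ≤ n → 1 ≤ k →
      ∃ G : V → C(Set.Icc (0 : Fin n → ℝ) 1, ℝ), Continuous G ∧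
        (∃ (net : NeuralNet) (φ : (Fin n → ℝ) → ℝ),
          NeuralNet.Represents relu net φ ∧
          net.depth = 2 * k ^ 3 + 8 ∧ net.width ≤ C ∧
          ∀ (u : V) (y : Fin n → ℝ) (hy : y ∈ Set.Icc (0 : Fin n → ℝ) 1),
            φ y = G u ⟨y, hy⟩) ∧
        (∀ m : ℕ, 1 ≤ m →
          ∀ (net : NeuralNet) (ψ : (Fin (m + n) → ℝ) → ℝ),
            NeuralNet.Represents relu net ψ →
            net.depth ≤ k → net.totalNodes ≤ 2 ^ k →
            ∀ (x : Fin m → K₁) (u : V),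
              (1 : ℝ) / 64 ≤
                ∫ y in Set.Icc (0 : Fin n → ℝ) 1,
                  if hy : y ∈ Set.Icc (0 : Fin n → ℝ) 1 then
                    |G u ⟨y, hy⟩ - ψ (Fin.append (fun j => (u : C(K₁, ℝ)) (x j)) y)|
                  else 0) := by
  classical
  refine ⟨2, ?_⟩
  intro n k hn hk
  obtain ⟨n', rfl⟩ : ∃ n', n = n' + 1 := ⟨n - 1, by omega⟩
  set dnet := S0.deepNet (n'+1) (2*k^3+6+1) with hdnet
  set φ : (Fin (n'+1) → ℝ) → ℝ :=
    fun y => dnet.output relu (fun i => if h : i < n'+1 then y ⟨i, h⟩ else 0) with hφdef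
  have hφcont : Continuous φ := by
    rw [hφdef]
    apply (S0.continuous_output dnet).comp
    apply continuous_pi
    intro i
    by_cases h : i < n'+1
    · simp only [dif_pos h]
      exact continuous_apply _
    · simp only [dif_neg h]
      exact continuous_const
  have hφval : ∀ y ∈ Set.Icc (0 : Fin (n'+1) → ℝ) 1, φ y = S0.tent^[2*k^3+6+1] (y 0) := by
    intro y hy
    have h0 : (fun i => if h : i < n'+1 then y ⟨i, h⟩ else 0) 0 = y 0 := by
      show (if h : (0:ℕ) < n'+1 then y ⟨0, h⟩ else 0) = y 0
      rw [dif_pos (by omega : (0:ℕ) < n'+1)]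
      exact congrArg y (Fin.ext (by simp))
    have hy0 : y 0 ∈ Set.Icc (0:ℝ) 1 := ⟨hy.1 0, hy.2 0⟩
    beta_reduce at h0
    rw [hφdef]
    have := S0.deepNet_output (n'+1) (2*k^3+6+1) (by omega) (by omega)
      (fun i => if h : i < n'+1 then y ⟨i, h⟩ else 0) (by rw [h0]; exact hy0)
    show NeuralNet.output relu dnet (fun i => if h : i < n'+1 then y ⟨i, h⟩ else 0)
      = S0.tent^[2*k^3+6+1] (y 0)
    rw [hdnet, this, h0]
  set G : V → C(Set.Icc (0 : Fin (n'+1) → ℝ) 1, ℝ) :=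
    fun _ => ⟨fun z => φ z.1, hφcont.comp continuous_subtype_val⟩ with hGdef
  refine ⟨G, continuous_const, ⟨dnet, φ, ⟨?_, ?_, ?_⟩, ?_, ?_, ?_⟩, ?_⟩
  · show 1 ≤ (2*k^3+6+1) + 1
    omega
  · show (S0.deepNet (n'+1) (2*k^3+6+1)).dims 0 = n'+1
    simp [S0.deepNet]
  · intro z
    rw [hφdef]
  · show (2*k^3+6+1) + 1 = 2*k^3+8
    omega
  · exact S0.deepNet_width (n'+1) (2*k^3+6+1)
  · intro u y hy
    rw [hGdef]
    rfl
  -- part (2)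
  intro m hm net ψ hrep hdepth hnodes x u
  obtain ⟨hdep1, hdims0, hout⟩ := hrep
  set cs : Fin m → ℝ := fun j => (u : C(K₁, ℝ)) (x j) with hcs
  set F : (Fin (n'+1) → ℝ) → ℝ := fun y => |φ y - ψ (Fin.append cs y)| with hF
  have hψeq : ψ = fun z => net.output relu
      (fun i => if h : i < m + (n'+1) then z ⟨i, h⟩ else 0) := funext fun z => (hout z).symm
  have hψcont : Continuous ψ := by
    rw [hψeq]
    apply (S0.continuous_output net).comp
    apply continuous_pi
    intro i
    by_cases h : i < m + (n'+1)
    · simp only [dif_pos h]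
      exact continuous_apply _
    · simp only [dif_neg h]
      exact continuous_const
  have happend : Continuous fun y : Fin (n'+1) → ℝ => Fin.append cs y := by
    apply continuous_pi
    intro i
    refine Fin.addCases (motive := fun i => Continuous fun y : Fin (n'+1) → ℝ =>
      Fin.append cs y i) ?_ ?_ i
    · intro i0
      simp only [Fin.append_left]
      exact continuous_const
    · intro i0
      simp only [Fin.append_right]
      exact continuous_apply i0
  have hFcont : Continuous F := by
    rw [hF]
    exact (hφcont.sub (hψcont.comp happend)).abs
  set e := MeasurableEquiv.piFinSuccAbove (fun _ : Fin (n'+1) => ℝ) 0 with he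
  have hmp : MeasurePreserving (⇑e) volume
      ((volume : Measure ℝ).prod (volume : Measure (Fin n' → ℝ))) := by
    have h1 := MeasureTheory.measurePreserving_piFinSuccAbove
      (fun _ : Fin (n'+1) => (volume : Measure ℝ)) 0
    have hv1 : (volume : Measure (Fin (n'+1) → ℝ)) = Measure.pi fun _ => volume := volume_pi
    have hv2 : (volume : Measure (Fin n' → ℝ)) = Measure.pi fun _ => volume := volume_pi
    rw [he, hv1, hv2]
    exact h1
  have hesymm : ∀ p : ℝ × (Fin n' → ℝ), e.symm p = Fin.insertNth 0 p.1 p.2 := by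
    intro p
    rw [he, MeasurableEquiv.piFinSuccAbove_symm_apply]
    rfl
  set H : ℝ × (Fin n' → ℝ) → ℝ := fun p => F (Fin.insertNth 0 p.1 p.2) with hH
  have hHcont : Continuous H := by
    rw [hH]
    exact hFcont.comp (Continuous.finInsertNth (A := fun _ : Fin (n'+1) => ℝ) 0 continuous_fst continuous_snd)
  set sprod := (Set.Icc (0:ℝ) 1) ×ˢ (Set.Icc (0 : Fin n' → ℝ) 1) with hsprod
  have hINT : Integrable (sprod.indicator H) ((volume : Measure ℝ).prod volume) := by
    rw [integrable_indicator_iff (measurableSet_Icc.prod measurableSet_Icc)]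
    exact (hHcont.continuousOn).integrableOn_compact (isCompact_Icc.prod isCompact_Icc)
  have h2 : (fun p : ℝ × (Fin n' → ℝ) =>
      (Set.Icc (0 : Fin (n'+1) → ℝ) 1).indicator F (e.symm p)) = sprod.indicator H := by
    funext p
    rw [hesymm p]
    by_cases hp : Fin.insertNth 0 p.1 p.2 ∈ Set.Icc (0 : Fin (n'+1) → ℝ) 1
    · rw [Set.indicator_of_mem hp]
      have hp' : p ∈ sprod := by
        rw [hsprod, Set.mem_prod]
        exact (S0.insertNth_mem_Icc p.1 p.2).1 hp
      rw [Set.indicator_of_mem hp', hH]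
    · rw [Set.indicator_of_notMem hp]
      have hp' : p ∉ sprod := by
        rw [hsprod, Set.mem_prod]
        intro hc
        exact hp ((S0.insertNth_mem_Icc p.1 p.2).2 ⟨hc.1, hc.2⟩)
      rw [Set.indicator_of_notMem hp']
  have h4 : ∀ y' : Fin n' → ℝ, (∫ t, sprod.indicator H (t, y'))
      = (Set.Icc (0 : Fin n' → ℝ) 1).indicator
          (fun y' => ∫ t in Set.Icc (0:ℝ) 1, F (Fin.insertNth 0 t y')) y' := by
    intro y'
    by_cases hy' : y' ∈ Set.Icc (0 : Fin n' → ℝ) 1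
    · rw [Set.indicator_of_mem hy']
      rw [← integral_indicator (measurableSet_Icc (a := (0:ℝ)) (b := 1))]
      congr 1
      funext t
      by_cases ht : t ∈ Set.Icc (0:ℝ) 1
      · rw [Set.indicator_of_mem ht]
        have hmem : (t, y') ∈ sprod := by
          rw [hsprod]
          exact ⟨ht, hy'⟩
        rw [Set.indicator_of_mem hmem, hH]
      · rw [Set.indicator_of_notMem ht]
        have hmem : (t, y') ∉ sprod := by
          rw [hsprod]
          intro hc
          exact ht hc.1
        rw [Set.indicator_of_notMem hmem]
    · rw [Set.indicator_of_notMem hy']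
      have hz : (fun t => sprod.indicator H (t, y')) = fun _ => 0 := by
        funext t
        have hmem : (t, y') ∉ sprod := by
          rw [hsprod]
          intro hc
          exact hy' hc.2
        rw [Set.indicator_of_notMem hmem]
      rw [hz]
      simp
  have hchain : ∫ y in Set.Icc (0 : Fin (n'+1) → ℝ) 1, F y
      = ∫ y' in Set.Icc (0 : Fin n' → ℝ) 1,
          (∫ t in Set.Icc (0:ℝ) 1, F (Fin.insertNth 0 t y')) := by
    rw [← integral_indicator measurableSet_Icc]
    have h1 : ∫ y, (Set.Icc (0 : Fin (n'+1) → ℝ) 1).indicator F y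
        = ∫ p, (Set.Icc (0 : Fin (n'+1) → ℝ) 1).indicator F (e.symm p)
            ∂((volume : Measure ℝ).prod volume) := by
      rw [← hmp.integral_comp e.measurableEmbedding
        (fun p => (Set.Icc (0 : Fin (n'+1) → ℝ) 1).indicator F (e.symm p))]
      congr 1
      funext y
      rw [MeasurableEquiv.symm_apply_apply]
    rw [h1, h2, MeasureTheory.integral_prod_symm _ hINT,
      ← integral_indicator measurableSet_Icc]
    congr 1
    funext y'
    exact h4 y'
  -- inner lower bound
  have hinner : ∀ y' ∈ Set.Icc (0 : Fin n' → ℝ) 1,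
      (1:ℝ)/64 ≤ ∫ t in Set.Icc (0:ℝ) 1, F (Fin.insertNth 0 t y') := by
    intro y' hy'
    rw [integral_Icc_eq_integral_Ioc]
    set pp : ℕ → ℝ := fun j => if h : j < m + (n'+1)
      then (Fin.append cs (Fin.cons (0:ℝ) y') ⟨j, h⟩) else 0 with hpdef
    set qq : ℕ → ℝ := fun j => if j = m then (1:ℝ) else 0 with hqdef
    have hFt : ∀ t ∈ Set.Ioc (0:ℝ) 1, F (Fin.insertNth 0 t y')
        = |S0.tent^[2*k^3+6+1] t - net.output relu (fun j => pp j + qq j * t)| := by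
      intro t ht
      have htIcc : t ∈ Set.Icc (0:ℝ) 1 := ⟨le_of_lt ht.1, ht.2⟩
      have hv : Fin.insertNth 0 t y' ∈ Set.Icc (0 : Fin (n'+1) → ℝ) 1 :=
        (S0.insertNth_mem_Icc t y').2 ⟨htIcc, hy'⟩
      show |φ (Fin.insertNth 0 t y') - ψ (Fin.append cs (Fin.insertNth 0 t y'))| = _
      have h5 : φ (Fin.insertNth 0 t y') = S0.tent^[2*k^3+6+1] t := by
        rw [hφval _ hv, Fin.insertNth_apply_same]
      have h6 : ψ (Fin.append cs (Fin.insertNth 0 t y'))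
          = net.output relu (fun j => pp j + qq j * t) := by
        rw [S0.insertNth_zero_eq_cons, ← hout (Fin.append cs (Fin.cons t y'))]
        congr 1
        funext j
        rw [hpdef, hqdef]
        exact S0.slice_affine m n' cs y' t j
      rw [h5, h6]
    rw [setIntegral_congr_fun measurableSet_Ioc hFt]
    apply S0.slice_lower_bound k hk net hdepth hnodes pp qq
    refine ((Continuous.continuousOn ?_).integrableOn_compact isCompact_Icc).mono_set
      Set.Ioc_subset_Icc_self
    refine Continuous.abs (Continuous.sub ?_ ?_)
    · exact (S0.continuous_tent).iterate _
    · exact (S0.continuous_output net).comp (continuous_pi fun j =>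
        continuous_const.add (continuous_const.mul continuous_id))
  -- outer bound
  have hJ : Integrable (fun y' : Fin n' → ℝ => ∫ t, sprod.indicator H (t, y')) volume :=
    hINT.integral_prod_right
  have hIOn : IntegrableOn
      (fun y' => ∫ t in Set.Icc (0:ℝ) 1, F (Fin.insertNth 0 t y'))
      (Set.Icc (0 : Fin n' → ℝ) 1) volume := by
    refine (hJ.integrableOn).congr_fun ?_ measurableSet_Icc
    intro y' hy'
    show (∫ t, sprod.indicator H (t, y')) = ∫ t in Set.Icc (0:ℝ) 1, F (Fin.insertNth 0 t y')
    rw [h4 y', Set.indicator_of_mem hy']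
  have hvol1 : (volume (Set.Icc (0 : Fin n' → ℝ) 1)).toReal = 1 := by
    rw [Real.volume_Icc_pi]
    simp
  have hfin : volume (Set.Icc (0 : Fin n' → ℝ) 1) ≠ ⊤ := by
    rw [Real.volume_Icc_pi]
    simp
  have hfinal := setIntegral_ge_of_const_le measurableSet_Icc hfin hinner hIOn
  rw [measureReal_def, hvol1, smul_eq_mul, one_mul] at hfinal
  have hkey : (1:ℝ)/64 ≤ ∫ y in Set.Icc (0 : Fin (n'+1) → ℝ) 1, F y :=
    hchain ▸ hfinal
  refine le_trans hkey (le_of_eq (setIntegral_congr_fun measurableSet_Icc ?_))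
  intro y hy
  show F y = if hy' : y ∈ Set.Icc (0 : Fin (n'+1) → ℝ) 1 then
      |G u ⟨y, hy'⟩ - ψ (Fin.append cs y)| else 0
  rw [dif_pos hy]
  rfl
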